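/- arXiv:2001.00847 — 2 statements merged into one kernel-verified Lean document; each statement's English description precedes it below -/
import Mathlib

section
/- One-time pad secrecy-leakage bound: let G be a finite abelian group and let S, S' be G-valued random variables and W', F', Z' random variables with finite ranges, such that S is uniformly distributed on G and independent of (S', W', F', Z'). Then I(S; (S' + S, W', Z') | F') ≤ log|G| − H(S' | W', F') + I(S'; (W', Z') | F'), where + denotes the group operation in G. -/
open scoped Classical
open Real

noncomputable section

namespace PA

/-- A probability mass function on a finite type, represented as a real-valued function. -/
def IsPMF {Ω : Type*} [Fintype Ω] (p : Ω → ℝ) : Prop :=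
  (∀ ω, 0 ≤ p ω) ∧ (∑ ω, p ω) = 1

/-- Probability of an event under the pmf `p`. -/
def probOf {Ω : Type*} [Fintype Ω] (p : Ω → ℝ) (E : Ω → Prop) : ℝ :=
  ∑ ω, if E ω then p ω else 0

/-- Shannon entropy (in bits, i.e. base-2 logarithm) of the random variable `X`
under the pmf `p`. -/
def ent {Ω α : Type*} [Fintype Ω] [Fintype α] (p : Ω → ℝ) (X : Ω → α) : ℝ :=
  (∑ a : α, Real.negMulLog (probOf p (fun ω => X ω = a))) / Real.log 2

/-- Conditional Shannon entropy `H(X | Z)` (in bits). -/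
def condEnt {Ω α β : Type*} [Fintype Ω] [Fintype α] [Fintype β]
    (p : Ω → ℝ) (X : Ω → α) (Z : Ω → β) : ℝ :=
  ent p (fun ω => (X ω, Z ω)) - ent p Z

/-- Mutual information `I(X;Y)` (in bits). -/
def mutInf {Ω α β : Type*} [Fintype Ω] [Fintype α] [Fintype β]
    (p : Ω → ℝ) (X : Ω → α) (Y : Ω → β) : ℝ :=
  ent p X + ent p Y - ent p (fun ω => (X ω, Y ω))

/-- Conditional mutual information `I(X;Y|Z)` (in bits). -/
def condMutInf {Ω α β γ : Type*} [Fintype Ω] [Fintype α] [Fintype β] [Fintype γ]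
    (p : Ω → ℝ) (X : Ω → α) (Y : Ω → β) (Z : Ω → γ) : ℝ :=
  ent p (fun ω => (X ω, Z ω)) + ent p (fun ω => (Y ω, Z ω))
    - ent p (fun ω => (X ω, Y ω, Z ω)) - ent p Z

/-- `X` and `Y` are conditionally independent given `M`, i.e. `X − M − Y` forms a
Markov chain. -/
def CondIndep {Ω α β γ : Type*} [Fintype Ω]
    (p : Ω → ℝ) (X : Ω → α) (M : Ω → β) (Y : Ω → γ) : Prop :=
  ∀ x m y,
    probOf p (fun ω => X ω = x ∧ M ω = m ∧ Y ω = y) * probOf p (fun ω => M ω = m)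
      = probOf p (fun ω => X ω = x ∧ M ω = m) * probOf p (fun ω => M ω = m ∧ Y ω = y)

end PA

open PA

section Helpers

variable {Ω : Type*} [Fintype Ω] (p : Ω → ℝ)

lemma probOf_congr {E F : Ω → Prop} (h : ∀ ω, E ω ↔ F ω) : probOf p E = probOf p F := by
  unfold probOf
  refine Finset.sum_congr rfl fun ω _ => ?_
  exact if_congr (h ω) rfl rfl

lemma probOf_nonneg (hp0 : ∀ ω, 0 ≤ p ω) (E : Ω → Prop) : 0 ≤ probOf p E := by
  refine Finset.sum_nonneg fun ω _ => ?_
  split <;> simp [hp0 ω]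

lemma sum_probOf {α : Type*} [Fintype α] (X : Ω → α) :
    ∑ a : α, probOf p (fun ω => X ω = a) = ∑ ω, p ω := by
  unfold probOf
  rw [Finset.sum_comm]
  refine Finset.sum_congr rfl fun ω _ => ?_
  simp

lemma probOf_partition {α : Type*} [Fintype α] (X : Ω → α) (E : Ω → Prop) :
    probOf p E = ∑ a : α, probOf p (fun ω => X ω = a ∧ E ω) := by
  unfold probOf
  rw [Finset.sum_comm]
  refine Finset.sum_congr rfl fun ω _ => ?_
  by_cases h : E ω <;> simp [h]

lemma probOf_false {E : Ω → Prop} (h : ∀ ω, ¬ E ω) : probOf p E = 0 := by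
  unfold probOf
  refine Finset.sum_eq_zero fun ω _ => ?_
  simp [h ω]

/-- Independence of two random variables. -/
def Indep {α β : Type*} (X : Ω → α) (Y : Ω → β) : Prop :=
  ∀ a b, probOf p (fun ω => X ω = a ∧ Y ω = b)
    = probOf p (fun ω => X ω = a) * probOf p (fun ω => Y ω = b)

lemma indep_comp {α β β' : Type*} [Fintype β] {X : Ω → α} {Y : Ω → β}
    (h : Indep p X Y) (f : β → β') : Indep p X (fun ω => f (Y ω)) := by
  intro a b'
  rw [probOf_partition p Y (fun ω => X ω = a ∧ f (Y ω) = b'),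
      probOf_partition p Y (fun ω => f (Y ω) = b'), Finset.mul_sum]
  refine Finset.sum_congr rfl fun b _ => ?_
  by_cases hb : f b = b'
  · have h1 : probOf p (fun ω => Y ω = b ∧ X ω = a ∧ f (Y ω) = b')
        = probOf p (fun ω => X ω = a ∧ Y ω = b) := by
      refine probOf_congr p fun ω => ?_
      constructor
      · rintro ⟨hy, hx, _⟩; exact ⟨hx, hy⟩
      · rintro ⟨hx, hy⟩; exact ⟨hy, hx, by rw [hy, hb]⟩
    have h2 : probOf p (fun ω => Y ω = b ∧ f (Y ω) = b')
        = probOf p (fun ω => Y ω = b) := by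
      refine probOf_congr p fun ω => ?_
      constructor
      · rintro ⟨hy, _⟩; exact hy
      · intro hy; exact ⟨hy, by rw [hy, hb]⟩
    rw [h1, h2, h a b]
  · have h1 : probOf p (fun ω => Y ω = b ∧ X ω = a ∧ f (Y ω) = b') = 0 := by
      refine probOf_false p fun ω => ?_
      rintro ⟨hy, _, hf'⟩; exact hb (hy ▸ hf')
    have h2 : probOf p (fun ω => Y ω = b ∧ f (Y ω) = b') = 0 := by
      refine probOf_false p fun ω => ?_
      rintro ⟨hy, hf'⟩; exact hb (hy ▸ hf')
    rw [h1, h2]; ring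

lemma ent_comp_inj {α β : Type*} [Fintype α] [Fintype β] (X : Ω → α) (f : α → β)
    (hf : Function.Injective f) : ent p (fun ω => f (X ω)) = ent p X := by
  unfold ent
  congr 1
  calc ∑ b : β, Real.negMulLog (probOf p (fun ω => f (X ω) = b))
      = ∑ b ∈ Finset.image f Finset.univ,
          Real.negMulLog (probOf p (fun ω => f (X ω) = b)) := by
        refine (Finset.sum_subset (Finset.subset_univ _) fun b _ hb => ?_).symm
        simp only [Finset.mem_image, Finset.mem_univ, true_and] at hb
        rw [probOf_false p (fun ω h => hb ⟨X ω, h⟩)]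
        simp
    _ = ∑ a : α, Real.negMulLog (probOf p (fun ω => f (X ω) = f a)) :=
        Finset.sum_image (fun x _ y _ hxy => hf hxy)
    _ = ∑ a : α, Real.negMulLog (probOf p (fun ω => X ω = a)) := by
        refine Finset.sum_congr rfl fun a _ => ?_
        congr 1
        exact probOf_congr p fun ω => ⟨fun h => hf h, fun h => by rw [h]⟩

lemma ent_pair_indep {α β : Type*} [Fintype α] [Fintype β] (hp : IsPMF p)
    {X : Ω → α} {Y : Ω → β} (h : Indep p X Y) :
    ent p (fun ω => (X ω, Y ω)) = ent p X + ent p Y := by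
  have hX : ∑ a : α, probOf p (fun ω => X ω = a) = 1 := by rw [sum_probOf]; exact hp.2
  have hY : ∑ b : β, probOf p (fun ω => Y ω = b) = 1 := by rw [sum_probOf]; exact hp.2
  unfold ent
  rw [← add_div]
  congr 1
  rw [Fintype.sum_prod_type]
  have step : ∀ a b, probOf p (fun ω => (X ω, Y ω) = (a, b))
      = probOf p (fun ω => X ω = a) * probOf p (fun ω => Y ω = b) := by
    intro a b
    rw [← h a b]
    exact probOf_congr p fun ω => by simp [Prod.ext_iff]
  calc ∑ a : α, ∑ b : β, Real.negMulLog (probOf p (fun ω => (X ω, Y ω) = (a, b)))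
      = ∑ a : α, ∑ b : β,
          (probOf p (fun ω => Y ω = b) * Real.negMulLog (probOf p (fun ω => X ω = a))
           + probOf p (fun ω => X ω = a) * Real.negMulLog (probOf p (fun ω => Y ω = b))) := by
        refine Finset.sum_congr rfl fun a _ => Finset.sum_congr rfl fun b _ => ?_
        rw [step a b, Real.negMulLog_mul]
    _ = ∑ a : α, (Real.negMulLog (probOf p (fun ω => X ω = a))
          + probOf p (fun ω => X ω = a) * ∑ b : β, Real.negMulLog (probOf p (fun ω => Y ω = b))) := by
        refine Finset.sum_congr rfl fun a _ => ?_
        rw [Finset.sum_add_distrib, ← Finset.sum_mul, ← Finset.mul_sum, hY, one_mul]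
    _ = _ := by
        rw [Finset.sum_add_distrib, ← Finset.sum_mul, hX, one_mul]

lemma ent_uniform {α : Type*} [Fintype α] (X : Ω → α)
    (hn : 0 < (Fintype.card α : ℝ))
    (h : ∀ a, probOf p (fun ω => X ω = a) = 1 / (Fintype.card α : ℝ)) :
    ent p X = Real.log (Fintype.card α) / Real.log 2 := by
  unfold ent
  congr 1
  simp only [h]
  rw [Finset.sum_const, Finset.card_univ, nsmul_eq_mul]
  rw [Real.negMulLog, one_div, Real.log_inv]
  field_simp

/-- Unnormalized subadditivity with total-mass correction (key analytic lemma). -/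
lemma negMulLog_submod {α β : Type*} [Fintype α] [Fintype β] (r : α → β → ℝ)
    (hr : ∀ a b, 0 ≤ r a b) :
    (∑ a : α, ∑ b : β, Real.negMulLog (r a b)) + Real.negMulLog (∑ a : α, ∑ b : β, r a b)
      ≤ (∑ a : α, Real.negMulLog (∑ b : β, r a b))
        + (∑ b : β, Real.negMulLog (∑ a : α, r a b)) := by
  set px : α → ℝ := fun a => ∑ b : β, r a b with hpx
  set py : β → ℝ := fun b => ∑ a : α, r a b with hpy
  set m : ℝ := ∑ a : α, ∑ b : β, r a b with hm
  have hpx0 : ∀ a, 0 ≤ px a := fun a => Finset.sum_nonneg fun b _ => hr a b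
  have hpy0 : ∀ b, 0 ≤ py b := fun b => Finset.sum_nonneg fun a _ => hr a b
  have hm0 : 0 ≤ m := Finset.sum_nonneg fun a _ => hpx0 a
  by_cases hmz : m = 0
  · have hr0 : ∀ a b, r a b = 0 := by
      intro a b
      have hsum : ∑ a : α, px a = 0 := hmz
      have h1 : px a = 0 :=
        (Finset.sum_eq_zero_iff_of_nonneg (fun a _ => hpx0 a)).1 hsum a (Finset.mem_univ a)
      exact (Finset.sum_eq_zero_iff_of_nonneg (fun b _ => hr a b)).1 h1 b (Finset.mem_univ b)
    have hpxz : ∀ a, px a = 0 := fun a => Finset.sum_eq_zero fun b _ => hr0 a b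
    have hpyz : ∀ b, py b = 0 := fun b => Finset.sum_eq_zero fun a _ => hr0 a b
    simp [hr0, hpxz, hpyz, hmz]
  have hmpos : 0 < m := lt_of_le_of_ne hm0 (Ne.symm hmz)
  have key : ∀ a b, r a b - px a * py b / m
      ≤ r a b * Real.log (r a b) + r a b * Real.log m
        - r a b * Real.log (px a) - r a b * Real.log (py b) := by
    intro a b
    rcases eq_or_lt_of_le (hr a b) with h0 | hpos
    · rw [← h0]
      have : 0 ≤ px a * py b / m := div_nonneg (mul_nonneg (hpx0 a) (hpy0 b)) hm0
      simp
      linarith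
    · have hpxa : 0 < px a :=
        lt_of_lt_of_le hpos (Finset.single_le_sum (fun b _ => hr a b) (Finset.mem_univ b))
      have hpyb : 0 < py b :=
        lt_of_lt_of_le hpos (Finset.single_le_sum (fun a _ => hr a b) (Finset.mem_univ a))
      have hlog := Real.log_le_sub_one_of_pos
        (show 0 < px a * py b / (r a b * m) by positivity)
      rw [Real.log_div (by positivity) (by positivity),
          Real.log_mul hpxa.ne' hpyb.ne', Real.log_mul hpos.ne' hmpos.ne'] at hlog
      have h2 := mul_le_mul_of_nonneg_left hlog hpos.le
      have h3 : r a b * (px a * py b / (r a b * m) - 1) = px a * py b / m - r a b := by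
        field_simp
      rw [h3] at h2
      ring_nf at h2 ⊢
      linarith
  have hle : ∑ a : α, ∑ b : β, (r a b - px a * py b / m)
      ≤ ∑ a : α, ∑ b : β, (r a b * Real.log (r a b) + r a b * Real.log m
        - r a b * Real.log (px a) - r a b * Real.log (py b)) :=
    Finset.sum_le_sum fun a _ => Finset.sum_le_sum fun b _ => key a b
  have hpym : ∑ b : β, py b = m := by rw [hm]; exact Finset.sum_comm
  have hzero : ∑ a : α, ∑ b : β, (r a b - px a * py b / m) = 0 := by
    have h1 : ∀ a, ∑ b : β, (r a b - px a * py b / m) = px a - px a := by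
      intro a
      rw [Finset.sum_sub_distrib]
      congr 1
      calc ∑ b : β, px a * py b / m = (∑ b : β, px a * py b) / m := by
            rw [Finset.sum_div]
        _ = px a * (∑ b : β, py b) / m := by rw [Finset.mul_sum]
        _ = px a := by rw [hpym]; field_simp
    simp [h1]
  have hsplit : ∑ a : α, ∑ b : β, (r a b * Real.log (r a b) + r a b * Real.log m
        - r a b * Real.log (px a) - r a b * Real.log (py b))
      = (- ∑ a : α, ∑ b : β, Real.negMulLog (r a b)) + (- Real.negMulLog m)
        - (- ∑ a : α, Real.negMulLog (px a)) - (- ∑ b : β, Real.negMulLog (py b)) := by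
    have c1 : ∑ a : α, ∑ b : β, r a b * Real.log (r a b)
        = - ∑ a : α, ∑ b : β, Real.negMulLog (r a b) := by
      simp [Real.negMulLog, Finset.sum_neg_distrib]
    have c2 : ∑ a : α, ∑ b : β, r a b * Real.log m = - Real.negMulLog m := by
      simp only [← Finset.sum_mul]
      rw [← hm, Real.negMulLog]
      ring
    have c3 : ∑ a : α, ∑ b : β, r a b * Real.log (px a)
        = - ∑ a : α, Real.negMulLog (px a) := by
      rw [← Finset.sum_neg_distrib]
      refine Finset.sum_congr rfl fun a _ => ?_
      rw [← Finset.sum_mul, Real.negMulLog]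
      ring_nf
      exact mul_comm _ _
    have c4 : ∑ a : α, ∑ b : β, r a b * Real.log (py b)
        = - ∑ b : β, Real.negMulLog (py b) := by
      rw [Finset.sum_comm, ← Finset.sum_neg_distrib]
      refine Finset.sum_congr rfl fun b _ => ?_
      rw [← Finset.sum_mul, Real.negMulLog]
      ring_nf
      exact mul_comm _ _
    calc ∑ a : α, ∑ b : β, (r a b * Real.log (r a b) + r a b * Real.log m
          - r a b * Real.log (px a) - r a b * Real.log (py b))
        = (∑ a : α, ∑ b : β, r a b * Real.log (r a b))
          + (∑ a : α, ∑ b : β, r a b * Real.log m)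
          - (∑ a : α, ∑ b : β, r a b * Real.log (px a))
          - (∑ a : α, ∑ b : β, r a b * Real.log (py b)) := by
          simp [Finset.sum_add_distrib, Finset.sum_sub_distrib]
      _ = _ := by rw [c1, c2, c3, c4]
  rw [hzero, hsplit] at hle
  linarith

lemma ent_submodular {α β γ : Type*} [Fintype α] [Fintype β] [Fintype γ]
    (hp0 : ∀ ω, 0 ≤ p ω) (X : Ω → α) (Y : Ω → β) (Z : Ω → γ) :
    ent p (fun ω => (X ω, Y ω, Z ω)) + ent p Z
      ≤ ent p (fun ω => (X ω, Z ω)) + ent p (fun ω => (Y ω, Z ω)) := by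
  have hL : (0:ℝ) < Real.log 2 := Real.log_pos one_lt_two
  unfold ent
  rw [← add_div, ← add_div]
  rw [div_le_div_iff_of_pos_right hL]
  set q : α → β → γ → ℝ :=
    fun a b c => probOf p (fun ω => X ω = a ∧ Y ω = b ∧ Z ω = c) with hq
  have hq0 : ∀ a b c, 0 ≤ q a b c := fun a b c => probOf_nonneg p hp0 _
  have hxz : ∀ a c, probOf p (fun ω => (X ω, Z ω) = (a, c)) = ∑ b : β, q a b c := by
    intro a c
    rw [probOf_congr p (F := fun ω => X ω = a ∧ Z ω = c)
        (fun ω => by simp [Prod.ext_iff]),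
      probOf_partition p Y (fun ω => X ω = a ∧ Z ω = c)]
    refine Finset.sum_congr rfl fun b _ => ?_
    refine probOf_congr p fun ω => ?_
    constructor
    · rintro ⟨h1, h2, h3⟩; exact ⟨h2, h1, h3⟩
    · rintro ⟨h1, h2, h3⟩; exact ⟨h2, h1, h3⟩
  have hyz : ∀ b c, probOf p (fun ω => (Y ω, Z ω) = (b, c)) = ∑ a : α, q a b c := by
    intro b c
    rw [probOf_congr p (F := fun ω => Y ω = b ∧ Z ω = c)
        (fun ω => by simp [Prod.ext_iff]),
      probOf_partition p X (fun ω => Y ω = b ∧ Z ω = c)]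
  have hz : ∀ c, probOf p (fun ω => Z ω = c) = ∑ a : α, ∑ b : β, q a b c := by
    intro c
    rw [probOf_partition p X (fun ω => Z ω = c)]
    refine Finset.sum_congr rfl fun a _ => ?_
    rw [probOf_partition p Y (fun ω => X ω = a ∧ Z ω = c)]
    · refine Finset.sum_congr rfl fun b _ => probOf_congr p fun ω => by tauto
  have hxyz : ∀ a b c, probOf p (fun ω => (X ω, Y ω, Z ω) = (a, b, c)) = q a b c := by
    intro a b c
    exact probOf_congr p fun ω => by simp [Prod.ext_iff]
  have e1 : ∑ t : α × γ, Real.negMulLog (probOf p (fun ω => (X ω, Z ω) = t))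
      = ∑ c : γ, ∑ a : α, Real.negMulLog (∑ b : β, q a b c) := by
    rw [Fintype.sum_prod_type, Finset.sum_comm]
    exact Finset.sum_congr rfl fun c _ => Finset.sum_congr rfl fun a _ => by rw [hxz]
  have e2 : ∑ t : β × γ, Real.negMulLog (probOf p (fun ω => (Y ω, Z ω) = t))
      = ∑ c : γ, ∑ b : β, Real.negMulLog (∑ a : α, q a b c) := by
    rw [Fintype.sum_prod_type, Finset.sum_comm]
    exact Finset.sum_congr rfl fun c _ => Finset.sum_congr rfl fun b _ => by rw [hyz]
  have e3 : ∑ c : γ, Real.negMulLog (probOf p (fun ω => Z ω = c))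
      = ∑ c : γ, Real.negMulLog (∑ a : α, ∑ b : β, q a b c) :=
    Finset.sum_congr rfl fun c _ => by rw [hz]
  have e4 : ∑ t : α × β × γ, Real.negMulLog (probOf p (fun ω => (X ω, Y ω, Z ω) = t))
      = ∑ c : γ, ∑ a : α, ∑ b : β, Real.negMulLog (q a b c) := by
    rw [Fintype.sum_prod_type]
    calc ∑ a : α, ∑ t : β × γ,
          Real.negMulLog (probOf p (fun ω => (X ω, Y ω, Z ω) = (a, t)))
        = ∑ a : α, ∑ c : γ, ∑ b : β, Real.negMulLog (q a b c) := by
          refine Finset.sum_congr rfl fun a _ => ?_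
          rw [Fintype.sum_prod_type, Finset.sum_comm]
          exact Finset.sum_congr rfl fun c _ => Finset.sum_congr rfl fun b _ => by rw [hxyz]
      _ = ∑ c : γ, ∑ a : α, ∑ b : β, Real.negMulLog (q a b c) := Finset.sum_comm
  rw [e1, e2, e3, e4, ← Finset.sum_add_distrib, ← Finset.sum_add_distrib]
  exact Finset.sum_le_sum fun c _ => negMulLog_submod (fun a b => q a b c) (fun a b => hq0 a b c)

end Helpers

/-- One-time pad secrecy-leakage bound. -/
theorem one_time_pad_secrecy_leakage_bound
    {Ω G WT FT ZT : Type*} [Fintype Ω] [Fintype G] [AddCommGroup G]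
    [Fintype WT] [Fintype FT] [Fintype ZT]
    (p : Ω → ℝ) (hp : IsPMF p)
    (S S' : Ω → G) (W' : Ω → WT) (F' : Ω → FT) (Z' : Ω → ZT)
    (hUnif : ∀ g : G, probOf p (fun ω => S ω = g) = 1 / (Fintype.card G : ℝ))
    (hInd : ∀ (g : G) (t : G × WT × FT × ZT),
      probOf p (fun ω => S ω = g ∧ (S' ω, W' ω, F' ω, Z' ω) = t)
        = probOf p (fun ω => S ω = g)
          * probOf p (fun ω => (S' ω, W' ω, F' ω, Z' ω) = t)) :
    condMutInf p S (fun ω => (S' ω + S ω, W' ω, Z' ω)) F'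
      ≤ Real.log (Fintype.card G) / Real.log 2
        - condEnt p S' (fun ω => (W' ω, F' ω))
        + condMutInf p S' (fun ω => (W' ω, Z' ω)) F' := by
  classical
  have hp0 := hp.1
  set n : ℝ := (Fintype.card G : ℝ) with hn
  have hnpos : 0 < n := by
    have h0 : 0 < Fintype.card G := Fintype.card_pos_iff.2 ⟨0⟩
    rw [hn]
    exact_mod_cast h0
  have hIndY : Indep p S (fun ω => (S' ω, W' ω, F' ω, Z' ω)) := hInd
  have hentS : ent p S = Real.log n / Real.log 2 := ent_uniform p S hnpos hUnif
  -- F1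
  have hIndSF : Indep p S F' := indep_comp p hIndY (fun t => t.2.2.1)
  have F1 : ent p (fun ω => (S ω, F' ω)) = Real.log n / Real.log 2 + ent p F' := by
    rw [ent_pair_indep p hp hIndSF, hentS]
  -- the padded secret is uniform
  have hIndSS' : Indep p S S' := indep_comp p hIndY (fun t => t.1)
  have hUU : ∀ u, probOf p (fun ω => S' ω + S ω = u) = 1 / n := by
    intro u
    rw [probOf_partition p S' (fun ω => S' ω + S ω = u)]
    have step : ∀ s', probOf p (fun ω => S' ω = s' ∧ S' ω + S ω = u)
        = 1 / n * probOf p (fun ω => S' ω = s') := by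
      intro s'
      have hiff : ∀ ω, (S' ω = s' ∧ S' ω + S ω = u) ↔ (S ω = u - s' ∧ S' ω = s') := by
        intro ω
        constructor
        · rintro ⟨rfl, h2⟩
          exact ⟨eq_sub_of_add_eq (by rw [add_comm]; exact h2), rfl⟩
        · rintro ⟨h1, rfl⟩
          refine ⟨rfl, ?_⟩
          rw [h1]; abel
      rw [probOf_congr p hiff, hIndSS' (u - s') s', hUnif]
    calc ∑ s' : G, probOf p (fun ω => S' ω = s' ∧ S' ω + S ω = u)
        = ∑ s' : G, 1 / n * probOf p (fun ω => S' ω = s') :=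
          Finset.sum_congr rfl fun s' _ => step s'
      _ = 1 / n := by rw [← Finset.mul_sum, sum_probOf p S', hp.2, mul_one]
  -- F2
  have hIndUV : Indep p (fun ω => S' ω + S ω) (fun ω => (W' ω, Z' ω, F' ω)) := by
    intro u v
    obtain ⟨w, z, fr⟩ := v
    have step : ∀ s' : G,
        probOf p (fun ω => S' ω = s' ∧ S' ω + S ω = u ∧ (W' ω, Z' ω, F' ω) = (w, z, fr))
          = 1 / n * probOf p (fun ω => S' ω = s' ∧ (W' ω, Z' ω, F' ω) = (w, z, fr)) := by
      intro s'
      have hiff : ∀ ω, (S' ω = s' ∧ S' ω + S ω = u ∧ (W' ω, Z' ω, F' ω) = (w, z, fr))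
          ↔ (S ω = u - s' ∧ (S' ω, W' ω, F' ω, Z' ω) = (s', w, fr, z)) := by
        intro ω
        simp only [Prod.mk.injEq]
        constructor
        · rintro ⟨rfl, h2, h3, h4, h5⟩
          exact ⟨eq_sub_of_add_eq (by rw [add_comm]; exact h2), rfl, h3, h5, h4⟩
        · rintro ⟨h1, rfl, h3, h4, h5⟩
          refine ⟨rfl, ?_, h3, h5, h4⟩
          rw [h1]; abel
      rw [probOf_congr p hiff, hInd (u - s') (s', w, fr, z), hUnif]
      congr 1
      refine probOf_congr p fun ω => ?_
      simp only [Prod.mk.injEq]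
      tauto
    rw [probOf_partition p S'
      (fun ω => S' ω + S ω = u ∧ (W' ω, Z' ω, F' ω) = (w, z, fr)), hUU u]
    calc ∑ s' : G,
          probOf p (fun ω => S' ω = s' ∧ S' ω + S ω = u ∧ (W' ω, Z' ω, F' ω) = (w, z, fr))
        = ∑ s' : G, 1 / n * probOf p (fun ω => S' ω = s' ∧ (W' ω, Z' ω, F' ω) = (w, z, fr)) :=
          Finset.sum_congr rfl fun s' _ => step s'
      _ = 1 / n * probOf p (fun ω => (W' ω, Z' ω, F' ω) = (w, z, fr)) := by
          rw [← Finset.mul_sum, ← probOf_partition p S']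
  have F2 : ent p (fun ω => ((S' ω + S ω, W' ω, Z' ω), F' ω))
      = Real.log n / Real.log 2 + ent p (fun ω => (W' ω, Z' ω, F' ω)) := by
    have hinj : Function.Injective (fun t : G × (WT × ZT × FT) =>
        ((t.1, t.2.1, t.2.2.1), t.2.2.2)) :=
      Function.LeftInverse.injective
        (g := fun t : (G × WT × ZT) × FT => (t.1.1, (t.1.2.1, t.1.2.2, t.2))) fun t => rfl
    have hb := ent_comp_inj p (fun ω => (S' ω + S ω, (W' ω, Z' ω, F' ω)))
      (fun t => ((t.1, t.2.1, t.2.2.1), t.2.2.2)) hinj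
    rw [show (fun ω => ((S' ω + S ω, W' ω, Z' ω), F' ω))
        = (fun ω => ((fun t : G × (WT × ZT × FT) => ((t.1, t.2.1, t.2.2.1), t.2.2.2))
            ((fun ω => (S' ω + S ω, (W' ω, Z' ω, F' ω))) ω))) from rfl, hb,
      ent_pair_indep p hp hIndUV, ent_uniform p _ hnpos hUU]
  -- F3
  have hIndSY2 : Indep p S (fun ω => (S' ω, W' ω, Z' ω, F' ω)) :=
    indep_comp p hIndY (fun t => (t.1, t.2.1, t.2.2.2, t.2.2.1))
  have F3 : ent p (fun ω => (S ω, (S' ω + S ω, W' ω, Z' ω), F' ω))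
      = Real.log n / Real.log 2 + ent p (fun ω => (S' ω, W' ω, Z' ω, F' ω)) := by
    have hinj : Function.Injective (fun t : G × (G × WT × ZT × FT) =>
        (t.1, (t.2.1 + t.1, t.2.2.1, t.2.2.2.1), t.2.2.2.2)) := by
      rintro ⟨s1, s1', w1, z1, f1⟩ ⟨s2, s2', w2, z2, f2⟩ h
      simp only [Prod.mk.injEq] at h
      obtain ⟨h1, ⟨h2, h3, h4⟩, h5⟩ := h
      subst h1 h3 h4 h5
      have h6 : s1' = s2' := add_right_cancel h2
      subst h6
      rfl
    have hb := ent_comp_inj p (fun ω => (S ω, (S' ω, W' ω, Z' ω, F' ω)))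
      (fun t => (t.1, (t.2.1 + t.1, t.2.2.1, t.2.2.2.1), t.2.2.2.2)) hinj
    rw [show (fun ω => (S ω, (S' ω + S ω, W' ω, Z' ω), F' ω))
        = (fun ω => ((fun t : G × (G × WT × ZT × FT) =>
            (t.1, (t.2.1 + t.1, t.2.2.1, t.2.2.2.1), t.2.2.2.2))
            ((fun ω => (S ω, (S' ω, W' ω, Z' ω, F' ω))) ω))) from rfl, hb,
      ent_pair_indep p hp hIndSY2, hentS]
  -- F4, F5 : reassociation bijections
  have F4 : ent p (fun ω => ((W' ω, Z' ω), F' ω)) = ent p (fun ω => (W' ω, Z' ω, F' ω)) := by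
    have hinj : Function.Injective (fun t : WT × ZT × FT => ((t.1, t.2.1), t.2.2)) :=
      Function.LeftInverse.injective
        (g := fun t : (WT × ZT) × FT => (t.1.1, t.1.2, t.2)) fun t => rfl
    exact ent_comp_inj p (fun ω => (W' ω, Z' ω, F' ω)) (fun t : WT × ZT × FT => ((t.1, t.2.1), t.2.2)) hinj
  have F5 : ent p (fun ω => (S' ω, (W' ω, Z' ω), F' ω))
      = ent p (fun ω => (S' ω, W' ω, Z' ω, F' ω)) := by
    have hinj : Function.Injective (fun t : G × WT × ZT × FT =>
        (t.1, (t.2.1, t.2.2.1), t.2.2.2)) :=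
      Function.LeftInverse.injective
        (g := fun t : G × (WT × ZT) × FT => (t.1, (t.2.1.1, t.2.1.2, t.2.2))) fun t => rfl
    exact ent_comp_inj p (fun ω => (S' ω, W' ω, Z' ω, F' ω)) (fun t : G × WT × ZT × FT => (t.1, (t.2.1, t.2.2.1), t.2.2.2)) hinj
  have hsub := ent_submodular p hp0 S' W' F'
  simp only [condMutInf, condEnt]
  rw [F1, F2, F3, F4, F5]
  linarith [hsub]
end
end

section
/- Storage-rate simplification identity: let U, V, A, X̃, Y be finite-valued random variables such that U − (V, A) − (X̃, Y) and V − (A, X̃) − Y form Markov chains. Then I(A; X̃) + I(U, V; X̃ | A) − I(U, V; Y | A) = I(A; X̃) + I(V; X̃ | A, Y); equivalently, I(U,V; X̃ | A) − I(U,V; Y | A) = I(V; X̃ | A, Y). -/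
open scoped Classical
open Real

noncomputable section

namespace PA

section Aux

variable {Ω : Type*} [Fintype Ω] {p : Ω → ℝ}

lemma probOf_congr {E F : Ω → Prop} (h : ∀ ω, E ω ↔ F ω) : probOf p E = probOf p F := by
  unfold probOf
  exact Finset.sum_congr rfl fun ω _ => if_congr (h ω) rfl rfl

lemma probOf_nonneg (hp : ∀ ω, 0 ≤ p ω) (E : Ω → Prop) : 0 ≤ probOf p E := by
  unfold probOf
  apply Finset.sum_nonneg
  intro ω _
  by_cases h : E ω <;> simp [h, hp ω]

lemma probOf_mono (hp : ∀ ω, 0 ≤ p ω) {E F : Ω → Prop} (h : ∀ ω, E ω → F ω) :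
    probOf p E ≤ probOf p F := by
  unfold probOf
  apply Finset.sum_le_sum
  intro ω _
  by_cases hE : E ω
  · simp [hE, h ω hE]
  · by_cases hF : F ω <;> simp [hE, hF, hp ω]

lemma sum_probOf {γ : Type*} [Fintype γ] (E : Ω → Prop) (Z : Ω → γ) :
    ∑ c, probOf p (fun ω => E ω ∧ Z ω = c) = probOf p E := by
  unfold probOf
  rw [Finset.sum_comm]
  refine Finset.sum_congr rfl fun ω _ => ?_
  by_cases h : E ω <;> simp [h]

lemma ent_comp {α β : Type*} [Fintype α] [Fintype β] (f : α → β)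
    (hf : Function.Injective f) (X : Ω → α) :
    ent p (fun ω => f (X ω)) = ent p X := by
  unfold ent
  congr 1
  calc (∑ b : β, Real.negMulLog (probOf p fun ω => f (X ω) = b))
      = ∑ b ∈ Finset.univ.image f, Real.negMulLog (probOf p fun ω => f (X ω) = b) := by
        refine (Finset.sum_subset (Finset.subset_univ _) ?_).symm
        intro b _ hb
        have h0 : probOf p (fun ω => f (X ω) = b) = 0 := by
          unfold probOf
          apply Finset.sum_eq_zero
          intro ω _
          have : ¬ (f (X ω) = b) := fun hc => hb (Finset.mem_image.mpr ⟨X ω, Finset.mem_univ _, hc⟩)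
          simp [this]
        simp [h0]
    _ = ∑ a : α, Real.negMulLog (probOf p fun ω => f (X ω) = f a) :=
        Finset.sum_image (fun a _ b _ h => hf h)
    _ = ∑ a : α, Real.negMulLog (probOf p fun ω => X ω = a) :=
        Finset.sum_congr rfl fun a _ => by rw [probOf_congr (fun ω => hf.eq_iff)]

lemma chain_core {α β γ : Type*} [Fintype α] [Fintype β] [Fintype γ]
    (P3 : α → β → γ → ℝ) (Pxm : α → β → ℝ) (Pmy : β → γ → ℝ) (Pm : β → ℝ)
    (h3 : ∀ x m y, 0 ≤ P3 x m y)
    (hle1 : ∀ x m y, P3 x m y ≤ Pxm x m)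
    (hle2 : ∀ x m y, P3 x m y ≤ Pmy m y)
    (hle3 : ∀ x m, Pxm x m ≤ Pm m)
    (hy : ∀ x m, ∑ y, P3 x m y = Pxm x m)
    (hx : ∀ m y, ∑ x, P3 x m y = Pmy m y)
    (hxm : ∀ m, ∑ x, Pxm x m = Pm m)
    (hCI : ∀ x m y, P3 x m y * Pm m = Pxm x m * Pmy m y) :
    (∑ x, ∑ m, ∑ y, Real.negMulLog (P3 x m y)) + (∑ m, Real.negMulLog (Pm m))
      = (∑ x, ∑ m, Real.negMulLog (Pxm x m)) + (∑ m, ∑ y, Real.negMulLog (Pmy m y)) := by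
  have key : ∀ x m y, Real.negMulLog (P3 x m y)
      = P3 x m y * Real.log (Pm m) - P3 x m y * Real.log (Pxm x m)
        - P3 x m y * Real.log (Pmy m y) := by
    intro x m y
    rcases eq_or_lt_of_le (h3 x m y) with h0 | h0
    · simp [← h0, Real.negMulLog]
    · have hxm0 : 0 < Pxm x m := lt_of_lt_of_le h0 (hle1 x m y)
      have hmy0 : 0 < Pmy m y := lt_of_lt_of_le h0 (hle2 x m y)
      have hm0 : 0 < Pm m := lt_of_lt_of_le hxm0 (hle3 x m)
      have hlog : Real.log (P3 x m y) + Real.log (Pm m)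
          = Real.log (Pxm x m) + Real.log (Pmy m y) := by
        rw [← Real.log_mul h0.ne' hm0.ne', ← Real.log_mul hxm0.ne' hmy0.ne', hCI x m y]
      have hl : Real.log (P3 x m y)
          = Real.log (Pxm x m) + Real.log (Pmy m y) - Real.log (Pm m) := by linarith
      rw [Real.negMulLog, hl]; ring
  have S1 : ∑ x, ∑ m, ∑ y, P3 x m y * Real.log (Pm m) = ∑ m, Pm m * Real.log (Pm m) := by
    calc ∑ x, ∑ m, ∑ y, P3 x m y * Real.log (Pm m)
        = ∑ x, ∑ m, Pxm x m * Real.log (Pm m) := by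
          refine Finset.sum_congr rfl fun x _ => Finset.sum_congr rfl fun m _ => ?_
          rw [← Finset.sum_mul, hy]
      _ = ∑ m, ∑ x, Pxm x m * Real.log (Pm m) := Finset.sum_comm
      _ = ∑ m, Pm m * Real.log (Pm m) := by
          refine Finset.sum_congr rfl fun m _ => ?_
          rw [← Finset.sum_mul, hxm]
  have S2 : ∑ x, ∑ m, ∑ y, P3 x m y * Real.log (Pxm x m)
      = ∑ x, ∑ m, Pxm x m * Real.log (Pxm x m) := by
    refine Finset.sum_congr rfl fun x _ => Finset.sum_congr rfl fun m _ => ?_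
    rw [← Finset.sum_mul, hy]
  have S3 : ∑ x, ∑ m, ∑ y, P3 x m y * Real.log (Pmy m y)
      = ∑ m, ∑ y, Pmy m y * Real.log (Pmy m y) := by
    calc ∑ x, ∑ m, ∑ y, P3 x m y * Real.log (Pmy m y)
        = ∑ m, ∑ x, ∑ y, P3 x m y * Real.log (Pmy m y) := Finset.sum_comm
      _ = ∑ m, ∑ y, ∑ x, P3 x m y * Real.log (Pmy m y) :=
          Finset.sum_congr rfl fun m _ => Finset.sum_comm
      _ = ∑ m, ∑ y, Pmy m y * Real.log (Pmy m y) := by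
          refine Finset.sum_congr rfl fun m _ => Finset.sum_congr rfl fun y _ => ?_
          rw [← Finset.sum_mul, hx]
  have main : ∑ x, ∑ m, ∑ y, Real.negMulLog (P3 x m y)
      = (∑ x, ∑ m, ∑ y, P3 x m y * Real.log (Pm m))
        - (∑ x, ∑ m, ∑ y, P3 x m y * Real.log (Pxm x m))
        - (∑ x, ∑ m, ∑ y, P3 x m y * Real.log (Pmy m y)) := by
    simp only [key, Finset.sum_sub_distrib]
  have n1 : ∑ m, Real.negMulLog (Pm m) = -∑ m, Pm m * Real.log (Pm m) := by
    simp [Real.negMulLog]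
  have n2 : ∑ x, ∑ m, Real.negMulLog (Pxm x m) = -∑ x, ∑ m, Pxm x m * Real.log (Pxm x m) := by
    simp [Real.negMulLog]
  have n3 : ∑ m, ∑ y, Real.negMulLog (Pmy m y) = -∑ m, ∑ y, Pmy m y * Real.log (Pmy m y) := by
    simp [Real.negMulLog]
  rw [main, n1, n2, n3, S1, S2, S3]
  ring

lemma ent_pair {α β : Type*} [Fintype α] [Fintype β] (X : Ω → α) (M : Ω → β) :
    ent p (fun ω => (X ω, M ω))
      = (∑ x, ∑ m, Real.negMulLog (probOf p fun ω => X ω = x ∧ M ω = m)) / Real.log 2 := by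
  unfold ent
  rw [Fintype.sum_prod_type]
  congr 1
  refine Finset.sum_congr rfl fun x _ => Finset.sum_congr rfl fun m _ => ?_
  rw [probOf_congr (F := fun ω => X ω = x ∧ M ω = m) (fun ω => by simp [Prod.ext_iff])]

lemma ent_triple {α β γ : Type*} [Fintype α] [Fintype β] [Fintype γ]
    (X : Ω → α) (M : Ω → β) (Y : Ω → γ) :
    ent p (fun ω => (X ω, M ω, Y ω))
      = (∑ x, ∑ m, ∑ y, Real.negMulLog (probOf p fun ω => X ω = x ∧ M ω = m ∧ Y ω = y))
          / Real.log 2 := by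
  unfold ent
  rw [Fintype.sum_prod_type]
  congr 1
  refine Finset.sum_congr rfl fun x _ => ?_
  rw [Fintype.sum_prod_type]
  refine Finset.sum_congr rfl fun m _ => Finset.sum_congr rfl fun y _ => ?_
  rw [probOf_congr (F := fun ω => X ω = x ∧ M ω = m ∧ Y ω = y) (fun ω => by simp [Prod.ext_iff])]

lemma ent_chain {α β γ : Type*} [Fintype α] [Fintype β] [Fintype γ]
    (hp : ∀ ω, 0 ≤ p ω) (X : Ω → α) (M : Ω → β) (Y : Ω → γ)
    (h : CondIndep p X M Y) :
    ent p (fun ω => (X ω, M ω, Y ω)) + ent p M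
      = ent p (fun ω => (X ω, M ω)) + ent p (fun ω => (M ω, Y ω)) := by
  rw [ent_triple, ent_pair, ent_pair]
  unfold ent
  rw [← add_div, ← add_div]
  congr 1
  exact chain_core
    (fun x m y => probOf p fun ω => X ω = x ∧ M ω = m ∧ Y ω = y)
    (fun x m => probOf p fun ω => X ω = x ∧ M ω = m)
    (fun m y => probOf p fun ω => M ω = m ∧ Y ω = y)
    (fun m => probOf p fun ω => M ω = m)
    (fun x m y => probOf_nonneg hp _)
    (fun x m y => probOf_mono hp fun ω hw => ⟨hw.1, hw.2.1⟩)
    (fun x m y => probOf_mono hp fun ω hw => ⟨hw.2.1, hw.2.2⟩)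
    (fun x m => probOf_mono hp fun ω hw => hw.2)
    (fun x m => by
      rw [← sum_probOf (fun ω => X ω = x ∧ M ω = m) Y]
      exact Finset.sum_congr rfl fun y _ => probOf_congr fun ω => by tauto)
    (fun m y => by
      rw [← sum_probOf (fun ω => M ω = m ∧ Y ω = y) X]
      exact Finset.sum_congr rfl fun x _ => probOf_congr fun ω => by tauto)
    (fun m => by
      rw [← sum_probOf (fun ω => M ω = m) X]
      exact Finset.sum_congr rfl fun x _ => probOf_congr fun ω => by tauto)
    (fun x m y => h x m y)

lemma condIndep_fst {α β γ δ : Type*} [Fintype δ]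
    (X : Ω → α) (M : Ω → β) (Y : Ω → γ) (Z : Ω → δ)
    (h : CondIndep p X M (fun ω => (Y ω, Z ω))) : CondIndep p X M Y := by
  intro x m y
  have h1 : probOf p (fun ω => X ω = x ∧ M ω = m ∧ Y ω = y)
      = ∑ z, probOf p (fun ω => X ω = x ∧ M ω = m ∧ (Y ω, Z ω) = (y, z)) := by
    rw [← sum_probOf (fun ω => X ω = x ∧ M ω = m ∧ Y ω = y) Z]
    exact Finset.sum_congr rfl fun z _ => probOf_congr fun ω => by
      simp only [Prod.mk.injEq]; tauto
  have h2 : probOf p (fun ω => M ω = m ∧ Y ω = y)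
      = ∑ z, probOf p (fun ω => M ω = m ∧ (Y ω, Z ω) = (y, z)) := by
    rw [← sum_probOf (fun ω => M ω = m ∧ Y ω = y) Z]
    exact Finset.sum_congr rfl fun z _ => probOf_congr fun ω => by
      simp only [Prod.mk.injEq]; tauto
  rw [h1, h2, Finset.sum_mul, Finset.mul_sum]
  exact Finset.sum_congr rfl fun z _ => h x m (y, z)

lemma condIndep_snd {α β γ δ : Type*} [Fintype γ]
    (X : Ω → α) (M : Ω → β) (Y : Ω → γ) (Z : Ω → δ)
    (h : CondIndep p X M (fun ω => (Y ω, Z ω))) : CondIndep p X M Z := by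
  intro x m z
  have h1 : probOf p (fun ω => X ω = x ∧ M ω = m ∧ Z ω = z)
      = ∑ y, probOf p (fun ω => X ω = x ∧ M ω = m ∧ (Y ω, Z ω) = (y, z)) := by
    rw [← sum_probOf (fun ω => X ω = x ∧ M ω = m ∧ Z ω = z) Y]
    exact Finset.sum_congr rfl fun y _ => probOf_congr fun ω => by
      simp only [Prod.mk.injEq]; tauto
  have h2 : probOf p (fun ω => M ω = m ∧ Z ω = z)
      = ∑ y, probOf p (fun ω => M ω = m ∧ (Y ω, Z ω) = (y, z)) := by
    rw [← sum_probOf (fun ω => M ω = m ∧ Z ω = z) Y]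
    exact Finset.sum_congr rfl fun y _ => probOf_congr fun ω => by
      simp only [Prod.mk.injEq]; tauto
  rw [h1, h2, Finset.sum_mul, Finset.mul_sum]
  exact Finset.sum_congr rfl fun y _ => h x m (y, z)

end Aux

end PA

open PA

/-- Storage-rate simplification identity.
If `U − (V,A) − (X̃,Y)` and `V − (A,X̃) − Y` form Markov chains, then
`I(A;X̃) + I(U,V;X̃|A) − I(U,V;Y|A) = I(A;X̃) + I(V;X̃|A,Y)` and equivalently
`I(U,V;X̃|A) − I(U,V;Y|A) = I(V;X̃|A,Y)`. -/
theorem storage_rate_simplification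
    {Ω UT VT AT XtT YT : Type*} [Fintype Ω]
    [Fintype UT] [Fintype VT] [Fintype AT] [Fintype XtT] [Fintype YT]
    (p : Ω → ℝ) (hp : IsPMF p)
    (U : Ω → UT) (V : Ω → VT) (A : Ω → AT) (Xt : Ω → XtT) (Y : Ω → YT)
    (hMC1 : CondIndep p U (fun ω => (V ω, A ω)) (fun ω => (Xt ω, Y ω)))
    (hMC2 : CondIndep p V (fun ω => (A ω, Xt ω)) Y) :
    mutInf p A Xt + condMutInf p (fun ω => (U ω, V ω)) Xt A
        - condMutInf p (fun ω => (U ω, V ω)) Y A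
      = mutInf p A Xt + condMutInf p V Xt (fun ω => (A ω, Y ω))
    ∧ condMutInf p (fun ω => (U ω, V ω)) Xt A
        - condMutInf p (fun ω => (U ω, V ω)) Y A
      = condMutInf p V Xt (fun ω => (A ω, Y ω)) := by
  obtain ⟨hp0, -⟩ := hp
  have hU_Xt : CondIndep p U (fun ω => (V ω, A ω)) Xt := condIndep_fst U _ Xt Y hMC1
  have hU_Y : CondIndep p U (fun ω => (V ω, A ω)) Y := condIndep_snd U _ Xt Y hMC1
  have E1a : ent p (fun ω => (U ω, (V ω, A ω), Xt ω)) + ent p (fun ω => (V ω, A ω))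
      = ent p (fun ω => (U ω, V ω, A ω)) + ent p (fun ω => ((V ω, A ω), Xt ω)) :=
    ent_chain hp0 U (fun ω => (V ω, A ω)) Xt hU_Xt
  have E1b : ent p (fun ω => (U ω, (V ω, A ω), Y ω)) + ent p (fun ω => (V ω, A ω))
      = ent p (fun ω => (U ω, V ω, A ω)) + ent p (fun ω => ((V ω, A ω), Y ω)) :=
    ent_chain hp0 U (fun ω => (V ω, A ω)) Y hU_Y
  have E2 : ent p (fun ω => (V ω, (A ω, Xt ω), Y ω)) + ent p (fun ω => (A ω, Xt ω))
      = ent p (fun ω => (V ω, A ω, Xt ω)) + ent p (fun ω => ((A ω, Xt ω), Y ω)) :=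
    ent_chain hp0 V (fun ω => (A ω, Xt ω)) Y hMC2
  have r1 : ent p (fun ω => (Xt ω, A ω)) = ent p (fun ω => (A ω, Xt ω)) :=
    ent_comp (fun q : AT × XtT => (q.2, q.1))
      (by rintro ⟨a1, a2⟩ ⟨b1, b2⟩ h
          simp only [Prod.mk.injEq] at h ⊢; tauto)
      (fun ω => (A ω, Xt ω))
  have r2 : ent p (fun ω => (Y ω, A ω)) = ent p (fun ω => (A ω, Y ω)) :=
    ent_comp (fun q : AT × YT => (q.2, q.1))
      (by rintro ⟨a1, a2⟩ ⟨b1, b2⟩ h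
          simp only [Prod.mk.injEq] at h ⊢; tauto)
      (fun ω => (A ω, Y ω))
  have r3 : ent p (fun ω => ((U ω, V ω), A ω)) = ent p (fun ω => (U ω, V ω, A ω)) :=
    ent_comp (fun q : UT × VT × AT => ((q.1, q.2.1), q.2.2))
      (by rintro ⟨a1, a2, a3⟩ ⟨b1, b2, b3⟩ h
          simp only [Prod.mk.injEq] at h ⊢; tauto)
      (fun ω => (U ω, V ω, A ω))
  have r4 : ent p (fun ω => ((U ω, V ω), Xt ω, A ω))
      = ent p (fun ω => (U ω, V ω, A ω, Xt ω)) :=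
    ent_comp (fun q : UT × VT × AT × XtT => ((q.1, q.2.1), q.2.2.2, q.2.2.1))
      (by rintro ⟨a1, a2, a3, a4⟩ ⟨b1, b2, b3, b4⟩ h
          simp only [Prod.mk.injEq] at h ⊢; tauto)
      (fun ω => (U ω, V ω, A ω, Xt ω))
  have r5 : ent p (fun ω => ((U ω, V ω), Y ω, A ω))
      = ent p (fun ω => (U ω, V ω, A ω, Y ω)) :=
    ent_comp (fun q : UT × VT × AT × YT => ((q.1, q.2.1), q.2.2.2, q.2.2.1))
      (by rintro ⟨a1, a2, a3, a4⟩ ⟨b1, b2, b3, b4⟩ h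
          simp only [Prod.mk.injEq] at h ⊢; tauto)
      (fun ω => (U ω, V ω, A ω, Y ω))
  have r7 : ent p (fun ω => (Xt ω, A ω, Y ω)) = ent p (fun ω => (A ω, Xt ω, Y ω)) :=
    ent_comp (fun q : AT × XtT × YT => (q.2.1, q.1, q.2.2))
      (by rintro ⟨a1, a2, a3⟩ ⟨b1, b2, b3⟩ h
          simp only [Prod.mk.injEq] at h ⊢; tauto)
      (fun ω => (A ω, Xt ω, Y ω))
  have r8 : ent p (fun ω => (V ω, Xt ω, A ω, Y ω))
      = ent p (fun ω => (V ω, A ω, Xt ω, Y ω)) :=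
    ent_comp (fun q : VT × AT × XtT × YT => (q.1, q.2.2.1, q.2.1, q.2.2.2))
      (by rintro ⟨a1, a2, a3, a4⟩ ⟨b1, b2, b3, b4⟩ h
          simp only [Prod.mk.injEq] at h ⊢; tauto)
      (fun ω => (V ω, A ω, Xt ω, Y ω))
  have r9 : ent p (fun ω => (U ω, (V ω, A ω), Xt ω))
      = ent p (fun ω => (U ω, V ω, A ω, Xt ω)) :=
    ent_comp (fun q : UT × VT × AT × XtT => (q.1, (q.2.1, q.2.2.1), q.2.2.2))
      (by rintro ⟨a1, a2, a3, a4⟩ ⟨b1, b2, b3, b4⟩ h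
          simp only [Prod.mk.injEq] at h ⊢; tauto)
      (fun ω => (U ω, V ω, A ω, Xt ω))
  have r11 : ent p (fun ω => ((V ω, A ω), Xt ω)) = ent p (fun ω => (V ω, A ω, Xt ω)) :=
    ent_comp (fun q : VT × AT × XtT => ((q.1, q.2.1), q.2.2))
      (by rintro ⟨a1, a2, a3⟩ ⟨b1, b2, b3⟩ h
          simp only [Prod.mk.injEq] at h ⊢; tauto)
      (fun ω => (V ω, A ω, Xt ω))
  have r12 : ent p (fun ω => (U ω, (V ω, A ω), Y ω))
      = ent p (fun ω => (U ω, V ω, A ω, Y ω)) :=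
    ent_comp (fun q : UT × VT × AT × YT => (q.1, (q.2.1, q.2.2.1), q.2.2.2))
      (by rintro ⟨a1, a2, a3, a4⟩ ⟨b1, b2, b3, b4⟩ h
          simp only [Prod.mk.injEq] at h ⊢; tauto)
      (fun ω => (U ω, V ω, A ω, Y ω))
  have r13 : ent p (fun ω => ((V ω, A ω), Y ω)) = ent p (fun ω => (V ω, A ω, Y ω)) :=
    ent_comp (fun q : VT × AT × YT => ((q.1, q.2.1), q.2.2))
      (by rintro ⟨a1, a2, a3⟩ ⟨b1, b2, b3⟩ h
          simp only [Prod.mk.injEq] at h ⊢; tauto)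
      (fun ω => (V ω, A ω, Y ω))
  have r14 : ent p (fun ω => (V ω, (A ω, Xt ω), Y ω))
      = ent p (fun ω => (V ω, A ω, Xt ω, Y ω)) :=
    ent_comp (fun q : VT × AT × XtT × YT => (q.1, (q.2.1, q.2.2.1), q.2.2.2))
      (by rintro ⟨a1, a2, a3, a4⟩ ⟨b1, b2, b3, b4⟩ h
          simp only [Prod.mk.injEq] at h ⊢; tauto)
      (fun ω => (V ω, A ω, Xt ω, Y ω))
  have r15 : ent p (fun ω => ((A ω, Xt ω), Y ω)) = ent p (fun ω => (A ω, Xt ω, Y ω)) :=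
    ent_comp (fun q : AT × XtT × YT => ((q.1, q.2.1), q.2.2))
      (by rintro ⟨a1, a2, a3⟩ ⟨b1, b2, b3⟩ h
          simp only [Prod.mk.injEq] at h ⊢; tauto)
      (fun ω => (A ω, Xt ω, Y ω))
  constructor <;>
  · simp only [mutInf, condMutInf]
    linarith [E1a, E1b, E2, r1, r2, r3, r4, r5, r7, r8, r9, r11, r12, r13, r14, r15]
end
end
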